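/- Let α, β, γ, μ, ν be an admissible solution of System B on [0,∞) with β ≡ γ. Then there exists δ > 0 such that α(t) ≥ δ for all t ≥ 0. -/

import Mathlib

open Set Filter Topology

/-- Approach-from-the-left limit: if `0 ≤ f` on `[a,b)` and `f` is continuous on `Ici 0`,
then `0 ≤ f b`. -/
lemma left_limit_nonneg (f : ℝ → ℝ) (a b : ℝ) (hf : ContinuousOn f (Set.Ici 0))
    (ha : 0 ≤ a) (hab : a < b) (hpos : ∀ s, a ≤ s → s < b → 0 ≤ f s) : 0 ≤ f b := by
  have hb : (0:ℝ) ≤ b := le_trans ha hab.le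
  have hsub : Set.Ico a b ⊆ Set.Ici (0:ℝ) := fun x hx => le_trans ha hx.1
  have hcw : ContinuousWithinAt f (Set.Ico a b) b := (hf b hb).mono hsub
  have hne : (𝓝[Set.Ico a b] b).NeBot := by
    rw [← mem_closure_iff_nhdsWithin_neBot, closure_Ico hab.ne]
    exact ⟨hab.le, le_rfl⟩
  refine ge_of_tendsto hcw ?_
  filter_upwards [eventually_mem_nhdsWithin] with x hx
  exact hpos x hx.1 hx.2

/-- If `f b = 0`, `f < 0` on `[a, b)` with `a < b`, and `f` has derivative `d` within
`Ici 0` at `b` (with `0 ≤ a`), then `0 ≤ d`. -/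
lemma deriv_nonneg_of_neg_left (f : ℝ → ℝ) (a b d : ℝ)
    (hd : HasDerivWithinAt f d (Set.Ici 0) b) (ha : 0 ≤ a) (hab : a < b)
    (hfb : f b = 0) (hneg : ∀ s, a ≤ s → s < b → f s < 0) : 0 ≤ d := by
  rw [hasDerivWithinAt_iff_tendsto_slope] at hd
  have hsub : Set.Ico a b ⊆ Set.Ici (0:ℝ) \ {b} := fun x hx =>
    ⟨le_trans ha hx.1, ne_of_lt hx.2⟩
  have hne : (𝓝[Set.Ico a b] b).NeBot := by
    rw [← mem_closure_iff_nhdsWithin_neBot, closure_Ico hab.ne]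
    exact ⟨hab.le, le_rfl⟩
  have htt : Tendsto (slope f b) (𝓝[Set.Ico a b] b) (𝓝 d) :=
    hd.mono_left (nhdsWithin_mono _ hsub)
  refine ge_of_tendsto htt ?_
  filter_upwards [eventually_mem_nhdsWithin] with x hx
  rw [slope_def_field, hfb, sub_zero]
  exact (div_pos_of_neg_of_neg (hneg x hx.1 hx.2) (by linarith [hx.2])).le

/-- If `f b = 0`, `b < u`, `0 ≤ b`, and `f` has derivative `-16` within `Ici 0` at `b`,
then there is `v ∈ (b, u)` with `f v < 0`. -/
lemma exists_neg_right (f : ℝ → ℝ) (b u : ℝ)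
    (hd : HasDerivWithinAt f (-16) (Set.Ici 0) b) (hb : 0 ≤ b) (hbu : b < u)
    (hfb : f b = 0) : ∃ v, b < v ∧ v < u ∧ f v < 0 := by
  rw [hasDerivWithinAt_iff_tendsto_slope] at hd
  have hsub : Set.Ioo b u ⊆ Set.Ici (0:ℝ) \ {b} := fun x hx =>
    ⟨le_trans hb hx.1.le, (ne_of_gt hx.1)⟩
  have hne : (𝓝[Set.Ioo b u] b).NeBot := by
    rw [← mem_closure_iff_nhdsWithin_neBot, closure_Ioo hbu.ne]
    exact ⟨le_rfl, hbu.le⟩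
  have htt : Tendsto (slope f b) (𝓝[Set.Ioo b u] b) (𝓝 (-16)) :=
    hd.mono_left (nhdsWithin_mono _ hsub)
  have hev : ∀ᶠ v in 𝓝[Set.Ioo b u] b, slope f b v < 0 :=
    htt.eventually_lt_const (by norm_num)
  obtain ⟨v, hv1, hv2⟩ := (hev.and eventually_mem_nhdsWithin).exists
  refine ⟨v, hv2.1, hv2.2, ?_⟩
  rw [slope_def_field, hfb, sub_zero] at hv1
  have hvb : 0 < v - b := by linarith [hv2.1]
  by_contra hcon
  push_neg at hcon
  exact absurd hv1 (not_lt.2 (div_nonneg hcon hvb.le))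


/-- **System B**: the homogeneous Ricci flow equations on `SL(2,ℂ)/U(1)` for
real-valued differentiable functions `α β γ μ ν` on a set `s`, with `τ := μ² + ν²`,
together with the admissibility conditions `α > 0`, `β > 0`, `γ > 0`, `βγ > τ`. -/
def IsAdmissibleSolutionB (α β γ μ ν : ℝ → ℝ) (s : Set ℝ) : Prop :=
  ∀ t ∈ s,
    0 < α t ∧ 0 < β t ∧ 0 < γ t ∧
    μ t ^ 2 + ν t ^ 2 < β t * γ t ∧
    HasDerivWithinAt α
      (2 * (16 * β t * γ t - α t ^ 2) / (β t * γ t - (μ t ^ 2 + ν t ^ 2))) s t ∧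
    HasDerivWithinAt β
      (-(β t * (16 * (μ t ^ 2 + ν t ^ 2) - α t ^ 2)) /
        (α t * (β t * γ t - (μ t ^ 2 + ν t ^ 2)))) s t ∧
    HasDerivWithinAt γ
      (-(γ t * (16 * (μ t ^ 2 + ν t ^ 2) - α t ^ 2)) /
        (α t * (β t * γ t - (μ t ^ 2 + ν t ^ 2)))) s t ∧
    HasDerivWithinAt μ
      (8 - μ t * (16 * β t * γ t - α t ^ 2) /
        (α t * (β t * γ t - (μ t ^ 2 + ν t ^ 2)))) s t ∧
    HasDerivWithinAt ν
      (-(ν t * (16 * β t * γ t - α t ^ 2)) /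
        (α t * (β t * γ t - (μ t ^ 2 + ν t ^ 2)))) s t

/-- For an admissible solution of System B on `[0,∞)` with `β ≡ γ`, the function `α`
is bounded below by a positive constant. -/
theorem systemB_alpha_bounded_below (α β γ μ ν : ℝ → ℝ)
    (h : IsAdmissibleSolutionB α β γ μ ν (Set.Ici 0))
    (hβγ : ∀ t ∈ Set.Ici (0 : ℝ), β t = γ t) :
    ∃ δ : ℝ, 0 < δ ∧ ∀ t ∈ Set.Ici (0 : ℝ), δ ≤ α t := by
  have hαpos : ∀ t ∈ Set.Ici (0:ℝ), 0 < α t := fun t ht => (h t ht).1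
  have hβpos : ∀ t ∈ Set.Ici (0:ℝ), 0 < β t := fun t ht => (h t ht).2.1
  have hDpos : ∀ t ∈ Set.Ici (0:ℝ), μ t ^ 2 + ν t ^ 2 < β t * γ t :=
    fun t ht => (h t ht).2.2.2.1
  have hα' : ∀ t ∈ Set.Ici (0:ℝ), HasDerivWithinAt α
      (2 * (16 * β t * γ t - α t ^ 2) / (β t * γ t - (μ t ^ 2 + ν t ^ 2)))
      (Set.Ici 0) t := fun t ht => (h t ht).2.2.2.2.1
  have hβ' : ∀ t ∈ Set.Ici (0:ℝ), HasDerivWithinAt β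
      (-(β t * (16 * (μ t ^ 2 + ν t ^ 2) - α t ^ 2)) /
        (α t * (β t * γ t - (μ t ^ 2 + ν t ^ 2))))
      (Set.Ici 0) t := fun t ht => (h t ht).2.2.2.2.2.1
  have hαc : ContinuousOn α (Set.Ici 0) := fun t ht => (hα' t ht).continuousWithinAt
  have hβc : ContinuousOn β (Set.Ici 0) := fun t ht => (hβ' t ht).continuousWithinAt
  -- nonnegativity of the derivative of α whenever α ≤ 4β
  have hAnn : ∀ t ∈ Set.Ici (0:ℝ), α t ≤ 4 * β t →
      0 ≤ 2 * (16 * β t * γ t - α t ^ 2) / (β t * γ t - (μ t ^ 2 + ν t ^ 2)) := by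
    intro t ht hle
    have h1 := hαpos t ht; have h2 := hβpos t ht; have h3 := hDpos t ht
    have hg := hβγ t ht
    apply div_nonneg
    · nlinarith [sq_nonneg (α t)]
    · linarith
  -- nonnegativity of the derivative of β whenever 4β ≤ α
  have hBnn : ∀ t ∈ Set.Ici (0:ℝ), 4 * β t ≤ α t →
      0 ≤ -(β t * (16 * (μ t ^ 2 + ν t ^ 2) - α t ^ 2)) /
        (α t * (β t * γ t - (μ t ^ 2 + ν t ^ 2))) := by
    intro t ht hle
    have h1 := hαpos t ht; have h2 := hβpos t ht; have h3 := hDpos t ht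
    have hg := hβγ t ht
    have hsq : (4 * β t) * (4 * β t) ≤ α t * α t :=
      mul_le_mul hle hle (by linarith) h1.le
    apply div_nonneg
    · nlinarith [hsq]
    · exact mul_nonneg h1.le (by linarith)
  -- monotonicity of α on intervals where α ≤ 4β
  have monA : ∀ a b : ℝ, 0 ≤ a → a ≤ b → (∀ s ∈ Set.Icc a b, α s ≤ 4 * β s) →
      α a ≤ α b := by
    intro a b ha hab hle
    have hsub : Set.Icc a b ⊆ Set.Ici (0:ℝ) := fun x hx => le_trans ha hx.1
    have hisub : interior (Set.Icc a b) ⊆ Set.Ici (0:ℝ) :=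
      Set.Subset.trans interior_subset hsub
    have := monotoneOn_of_hasDerivWithinAt_nonneg (convex_Icc a b) (hαc.mono hsub)
      (f' := fun x => 2 * (16 * β x * γ x - α x ^ 2) /
        (β x * γ x - (μ x ^ 2 + ν x ^ 2)))
      (fun x hx => ((hα' x (hisub hx)).mono hisub))
      (fun x hx => hAnn x (hisub hx) (hle x (interior_subset hx)))
    exact this (Set.left_mem_Icc.2 hab) (Set.right_mem_Icc.2 hab) hab
  -- monotonicity of β on intervals where 4β ≤ α
  have monB : ∀ a b : ℝ, 0 ≤ a → a ≤ b → (∀ s ∈ Set.Icc a b, 4 * β s ≤ α s) →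
      β a ≤ β b := by
    intro a b ha hab hle
    have hsub : Set.Icc a b ⊆ Set.Ici (0:ℝ) := fun x hx => le_trans ha hx.1
    have hisub : interior (Set.Icc a b) ⊆ Set.Ici (0:ℝ) :=
      Set.Subset.trans interior_subset hsub
    have := monotoneOn_of_hasDerivWithinAt_nonneg (convex_Icc a b) (hβc.mono hsub)
      (f' := fun x => -(β x * (16 * (μ x ^ 2 + ν x ^ 2) - α x ^ 2)) /
        (α x * (β x * γ x - (μ x ^ 2 + ν x ^ 2))))
      (fun x hx => ((hβ' x (hisub hx)).mono hisub))
      (fun x hx => hBnn x (hisub hx) (hle x (interior_subset hx)))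
    exact this (Set.left_mem_Icc.2 hab) (Set.right_mem_Icc.2 hab) hab
  -- derivative of α - 4β at boundary points α = 4β is -16
  have hg' : ∀ t ∈ Set.Ici (0:ℝ), α t = 4 * β t →
      HasDerivWithinAt (fun s => α s - 4 * β s) (-16) (Set.Ici 0) t := by
    intro t ht heq
    have h1 := hαpos t ht; have h2 := hβpos t ht; have h3 := hDpos t ht
    have hg := hβγ t ht
    have hd := (hα' t ht).sub ((hβ' t ht).const_mul 4)
    refine hd.congr_deriv ?_
    rw [← hg] at h3 ⊢
    rw [heq]
    have hb : β t ≠ 0 := ne_of_gt h2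
    have hden : β t * β t - (μ t ^ 2 + ν t ^ 2) ≠ 0 := by nlinarith
    field_simp
    have hden' : β t ^ 2 - μ t ^ 2 - ν t ^ 2 ≠ 0 := by nlinarith
    have hx : (β t ^ 2 - μ t ^ 2 - ν t ^ 2) * (β t ^ 2 - μ t ^ 2 - ν t ^ 2)⁻¹ = 1 :=
      mul_inv_cancel₀ hden'
    linear_combination (-16) * hx
  -- continuity of α - 4β and 4β - α on Ici 0
  have hgc : ContinuousOn (fun s => α s - 4 * β s) (Set.Ici 0) :=
    hαc.sub (continuousOn_const.mul hβc)
  have hgc' : ContinuousOn (fun s => 4 * β s - α s) (Set.Ici 0) :=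
    (continuousOn_const.mul hβc).sub hαc
  -- no-return lemma: once α < 4β, stays α < 4β
  have hL1 : ∀ t1 t2 : ℝ, 0 ≤ t1 → t1 ≤ t2 → α t1 < 4 * β t1 → α t2 < 4 * β t2 := by
    intro t1 t2 h1 h12 hneg
    by_contra hcon
    push_neg at hcon
    have hbdd : BddBelow {s ∈ Set.Icc t1 t2 | 4 * β s ≤ α s} := ⟨t1, fun x hx => hx.1.1⟩
    have hScl : IsClosed {s ∈ Set.Icc t1 t2 | 4 * β s ≤ α s} := by
      have : {s ∈ Set.Icc t1 t2 | 4 * β s ≤ α s}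
          = Set.Icc t1 t2 ∩ (fun s => α s - 4 * β s) ⁻¹' Set.Ici 0 := by
        ext x; simp [Set.mem_setOf_eq, sub_nonneg, and_comm]
      rw [this]
      exact ContinuousOn.preimage_isClosed_of_isClosed
        (hgc.mono (fun x hx => le_trans h1 hx.1)) isClosed_Icc isClosed_Ici
    have hSne : {s ∈ Set.Icc t1 t2 | 4 * β s ≤ α s}.Nonempty :=
      ⟨t2, ⟨h12, le_rfl⟩, hcon⟩
    set c := sInf {s ∈ Set.Icc t1 t2 | 4 * β s ≤ α s} with hc
    have hcS : c ∈ {s ∈ Set.Icc t1 t2 | 4 * β s ≤ α s} := hScl.csInf_mem hSne hbdd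
    have hc0 : 0 ≤ c := le_trans h1 hcS.1.1
    have ht1c : t1 < c := by
      rcases lt_or_eq_of_le hcS.1.1 with hlt | heq
      · exact hlt
      · exact absurd hcS.2 (by rw [← heq]; exact not_le.2 hneg)
    have hbef : ∀ s, t1 ≤ s → s < c → α s < 4 * β s := by
      intro s hs hsc
      by_contra hcc
      push_neg at hcc
      exact absurd (csInf_le hbdd ⟨⟨hs, le_trans hsc.le hcS.1.2⟩, hcc⟩) (not_le.2 hsc)
    have hceq : α c - 4 * β c = 0 := by
      have hle : 0 ≤ (fun s => 4 * β s - α s) c :=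
        left_limit_nonneg _ t1 c hgc' h1 ht1c (fun s hs hsc => by
          have := hbef s hs hsc; show 0 ≤ 4 * β s - α s; linarith)
      change 0 ≤ 4 * β c - α c at hle
      linarith [hcS.2]
    have hderiv := hg' c hc0 (by linarith)
    have := deriv_nonneg_of_neg_left (fun s => α s - 4 * β s) t1 c (-16)
      hderiv h1 ht1c hceq (fun s hs hsc => by
        have := hbef s hs hsc; show α s - 4 * β s < 0; linarith)
    norm_num at this
  -- main argument
  refine ⟨min (α 0) (4 * β 0), lt_min (hαpos 0 Set.self_mem_Ici)
    (by have := hβpos 0 Set.self_mem_Ici; linarith), ?_⟩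
  intro t ht
  by_cases hall : ∀ s ∈ Set.Icc (0:ℝ) t, 4 * β s ≤ α s
  · have hb := monB 0 t le_rfl ht hall
    calc min (α 0) (4 * β 0) ≤ 4 * β 0 := min_le_right _ _
      _ ≤ 4 * β t := by linarith
      _ ≤ α t := hall t ⟨ht, le_rfl⟩
  · push_neg at hall
    obtain ⟨s0, hs0, hs0lt⟩ := hall
    have hbdd : BddBelow {s ∈ Set.Icc (0:ℝ) t | α s ≤ 4 * β s} :=
      ⟨0, fun x hx => hx.1.1⟩
    have hScl : IsClosed {s ∈ Set.Icc (0:ℝ) t | α s ≤ 4 * β s} := by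
      have : {s ∈ Set.Icc (0:ℝ) t | α s ≤ 4 * β s}
          = Set.Icc 0 t ∩ (fun s => 4 * β s - α s) ⁻¹' Set.Ici 0 := by
        ext x; simp [Set.mem_setOf_eq, sub_nonneg, and_comm]
      rw [this]
      exact ContinuousOn.preimage_isClosed_of_isClosed
        (hgc'.mono (fun x hx => hx.1)) isClosed_Icc isClosed_Ici
    have hSne : {s ∈ Set.Icc (0:ℝ) t | α s ≤ 4 * β s}.Nonempty :=
      ⟨s0, hs0, hs0lt.le⟩
    set t0 := sInf {s ∈ Set.Icc (0:ℝ) t | α s ≤ 4 * β s} with ht0def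
    have ht0S : t0 ∈ {s ∈ Set.Icc (0:ℝ) t | α s ≤ 4 * β s} := hScl.csInf_mem hSne hbdd
    obtain ⟨⟨ht00, ht0t⟩, ht0le⟩ := ht0S
    have hbefore : ∀ s, 0 ≤ s → s < t0 → 4 * β s ≤ α s := by
      intro s hs hst0
      by_contra hcc
      push_neg at hcc
      exact absurd (csInf_le hbdd ⟨⟨hs, le_trans hst0.le ht0t⟩, hcc.le⟩)
        (not_le.2 hst0)
    have hstep1 : min (α 0) (4 * β 0) ≤ α t0 := by
      rcases eq_or_lt_of_le ht00 with h0 | h0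
      · rw [← h0]; exact min_le_left _ _
      · have hge : 4 * β t0 ≤ α t0 := by
          have := left_limit_nonneg (fun s => α s - 4 * β s) 0 t0 hgc le_rfl h0
            (fun s hs hst0 => by
              have := hbefore s hs hst0; show 0 ≤ α s - 4 * β s; linarith)
          change 0 ≤ α t0 - 4 * β t0 at this
          linarith
        have hmon : β 0 ≤ β t0 := by
          apply monB 0 t0 le_rfl ht00
          intro s hs
          rcases lt_or_eq_of_le hs.2 with hlt | heq
          · exact hbefore s hs.1 hlt
          · rw [heq]; exact hge
        calc min (α 0) (4 * β 0) ≤ 4 * β 0 := min_le_right _ _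
          _ ≤ 4 * β t0 := by linarith
          _ ≤ α t0 := hge
    have hafter : ∀ u ∈ Set.Icc t0 t, α u ≤ 4 * β u := by
      intro u hu
      rcases eq_or_lt_of_le hu.1 with h0 | h0
      · rw [← h0]; exact ht0le
      · rcases lt_or_eq_of_le ht0le with hlt | heq
        · exact (hL1 t0 u ht00 hu.1 hlt).le
        · obtain ⟨v, hv1, hv2, hv3⟩ := exists_neg_right (fun s => α s - 4 * β s)
            t0 u (hg' t0 ht00 heq) ht00 h0 (by show α t0 - 4 * β t0 = 0; rw [heq]; ring)
          have hv3' : α v - 4 * β v < 0 := hv3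
          exact (hL1 v u (le_trans ht00 hv1.le) hv2.le (by linarith)).le
    exact le_trans hstep1 (monA t0 t ht00 ht0t hafter)
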